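/- Let L be a number field containing a primitive n-th root of unity and let F be a cyclic Galois extension of L of degree n. Then there exist ξ ∈ L and α ∈ F with αⁿ = ξ and F = L(α), and moreover the conjugates {γ(Σ_{s=0}^{n−1} α^s) : γ ∈ Gal(F/L)} of the element Σ_{s=0}^{n−1} α^s form a normal basis of F over L. -/

import Mathlib

/-- `x` generates a normal basis of `F` over `L`: the family of conjugates
`{γ(x) : γ ∈ Gal(F/L)}` is an `L`-basis of `F`. -/
def IsNormalBasisGen (L F : Type*) [Field L] [Field F] [Algebra L F] (x : F) : Prop :=
  LinearIndependent L (fun σ : F ≃ₐ[L] F => σ x) ∧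
    Submodule.span L (Set.range fun σ : F ≃ₐ[L] F => σ x) = ⊤

/-- Let `L` be a number field containing a primitive `n`-th root of unity and `F/L` a cyclic
Galois extension of degree `n`. Then `F = L(α)` for some `α` with `αⁿ = ξ ∈ L`, and the
conjugates of `∑_{s=0}^{n-1} α^s` form a normal basis of `F` over `L`. -/
theorem kummer_normal_basis (L : Type*) [Field L] [NumberField L]
    (F : Type*) [Field F] [Algebra L F] [FiniteDimensional L F] [IsGalois L F]
    [IsCyclic (F ≃ₐ[L] F)]
    (n : ℕ) (hn : Module.finrank L F = n) (ζ : L) (hζ : IsPrimitiveRoot ζ n) :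
    ∃ (ξ : L) (α : F), α ^ n = algebraMap L F ξ ∧
      IntermediateField.adjoin L {α} = ⊤ ∧
      IsNormalBasisGen L F (∑ s ∈ Finset.range n, α ^ s) := by
  have hnpos : 0 < n := hn ▸ Module.finrank_pos
  haveI : NeZero n := ⟨hnpos.ne'⟩
  -- Kummer theory: get a radical generator
  have hK : (primitiveRoots (Module.finrank L F) L).Nonempty :=
    ⟨ζ, (mem_primitiveRoots (hn ▸ hnpos)).mpr (hn ▸ hζ)⟩
  obtain ⟨α₀, ⟨ξ₀, hξ₀⟩, hadj₀⟩ := exists_root_adjoin_eq_top_of_isCyclic L F hK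
  obtain ⟨α, ξ, hαξ, hadj, hα0⟩ :
      ∃ (α : F) (ξ : L), α ^ n = algebraMap L F ξ ∧
        IntermediateField.adjoin L {α} = ⊤ ∧ α ≠ 0 := by
    by_cases h : α₀ = 0
    · refine ⟨1, 1, by simp, ?_, one_ne_zero⟩
      have hbot : (⊥ : IntermediateField L F) = ⊤ := by
        rw [← IntermediateField.adjoin_zero (F := L) (E := F), ← h]; exact hadj₀
      rw [eq_top_iff, ← hbot]
      exact bot_le
    · exact ⟨α₀, ξ₀, by rw [← hn]; exact hξ₀.symm, hadj₀, h⟩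
  refine ⟨ξ, α, hαξ, hadj, ?_⟩
  -- the powers of α form a basis
  have hint : IsIntegral L α := IsIntegral.of_finite L α
  let pb : PowerBasis L F := (IntermediateField.adjoin.powerBasis hint).map
    ((IntermediateField.equivOfEq hadj).trans IntermediateField.topEquiv)
  have hgen : pb.gen = α := rfl
  have hd : pb.dim = n := by rw [← PowerBasis.finrank pb, hn]
  let b : Module.Basis (Fin n) L F := pb.basis.reindex (finCongr hd)
  have hb : ∀ i : Fin n, b i = α ^ (i : ℕ) := by
    intro i
    simp [b, pb.basis_eq_pow, hgen]
  -- every Galois conjugate of α is ζ^k • α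
  have hζF : IsPrimitiveRoot (algebraMap L F ζ) n :=
    hζ.map_of_injective (algebraMap L F).injective
  have key : ∀ σ : F ≃ₐ[L] F, ∃ k, σ α = algebraMap L F (ζ ^ k) * α := by
    intro σ
    have h1 : (σ α / α) ^ n = 1 := by
      have hαn : (σ α) ^ n = α ^ n := by
        rw [← map_pow, hαξ, AlgEquiv.commutes, ← hαξ]
      rw [div_pow, hαn, div_self (pow_ne_zero n hα0)]
    obtain ⟨k, _, hk2⟩ := hζF.eq_pow_of_pow_eq_one h1
    refine ⟨k, ?_⟩
    rw [map_pow, hk2, div_mul_cancel₀]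
    exact hα0
  choose k hk using key
  -- the map σ ↦ ζ ^ k σ is injective
  have hinj : Function.Injective (fun σ : F ≃ₐ[L] F => ζ ^ k σ) := by
    intro σ τ h
    simp only at h
    have hα : σ α = τ α := by rw [hk, hk, h]
    have hsub : Algebra.adjoin L ({α} : Set F) = ⊤ := by
      have := IntermediateField.adjoin_simple_toSubalgebra_of_isAlgebraic hint.isAlgebraic
      rw [← this, hadj]; rfl
    have : σ.toAlgHom = τ.toAlgHom :=
      AlgHom.ext_of_adjoin_eq_top hsub (fun x hx => by
        rcases hx with rfl; exact hα)
    exact AlgEquiv.ext fun x => congrFun (congrArg DFunLike.coe this) x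
  -- compute the conjugates of y = ∑ α^s
  set y : F := ∑ s ∈ Finset.range n, α ^ s with hy
  have hconj : ∀ σ : F ≃ₐ[L] F, σ y = ∑ i : Fin n, ((ζ ^ k σ) ^ (i : ℕ)) • b i := by
    intro σ
    rw [hy, map_sum, ← Fin.sum_univ_eq_sum_range (fun s => σ (α ^ s)) n]
    refine Finset.sum_congr rfl fun i _ => ?_
    rw [map_pow, hk, mul_pow, ← map_pow, hb, Algebra.smul_def, map_pow]
  -- set up the determinant criterion
  haveI : DecidableEq (F ≃ₐ[L] F) := Classical.decEq _
  let e : (F ≃ₐ[L] F) ≃ Fin n :=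
    Fintype.equivFinOfCardEq (by rw [Fintype.card_eq_nat_card, IsGalois.card_aut_eq_finrank, hn])
  let b' : Module.Basis (F ≃ₐ[L] F) L F := b.reindex e.symm
  refine (Module.Basis.is_basis_iff_det b').mpr ?_
  rw [Module.Basis.det_apply, isUnit_iff_ne_zero]
  have hmat : b'.toMatrix (fun σ : F ≃ₐ[L] F => σ y) =
      (Matrix.transpose (Matrix.vandermonde (fun j : Fin n => ζ ^ k (e.symm j)))).submatrix e e := by
    ext σ τ
    rw [Module.Basis.toMatrix_apply, Module.Basis.repr_reindex_apply, Equiv.symm_symm, hconj τ,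
      Module.Basis.repr_sum_self]
    simp [Matrix.vandermonde, Matrix.submatrix, Matrix.transpose]
  rw [hmat, Matrix.det_submatrix_equiv_self, Matrix.det_transpose]
  rw [Matrix.det_vandermonde_ne_zero_iff]
  exact hinj.comp e.symm.injective
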